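/- Let T be a tree on a finite vertex type V (a connected acyclic simple graph), let x ≠ y be vertices with x and y not adjacent in T, and let G be the simple graph obtained from T by adding the edge {x, y} (so G.Adj a b iff T.Adj a b or {a, b} = {x, y}). Then every cycle c in G uses the edge {x, y} (i.e., s(x,y) lies in the edge list of c), and the set of vertices in the support of c equals the set of vertices in the support of the (unique) path from x to y in T. (Every non-tree edge, together with the spanning-tree path between its endpoints, forms the unique cycle it creates.) -/

import Mathlib

open SimpleGraph

-- Lemma A: in a path starting at x containing edge s(x,y), the first step goes to y
lemma lemA {V : Type*} {G : SimpleGraph V} {x y u : V} (p : G.Walk x u)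
    (hp : p.IsPath) (he : s(x, y) ∈ p.edges) :
    ∃ (h : G.Adj x y) (q : G.Walk y u), p = SimpleGraph.Walk.cons h q := by
  cases p with
  | nil => simp at he
  | @cons _ b _ h q =>
    rw [Walk.edges_cons, List.mem_cons] at he
    rcases he with he | he
    · have hb : b = y := by
        rw [Sym2.eq_iff] at he
        rcases he with ⟨-, h2⟩ | ⟨h1, h2⟩
        · exact h2.symm
        · exact h1.symm.trans h2.symm
      subst hb
      exact ⟨h, q, rfl⟩
    · exact absurd (q.fst_mem_support_of_mem_edges he) ((SimpleGraph.Walk.cons_isPath_iff _ _).mp hp).2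

-- Lemma B
lemma lemB {V : Type*} {G : SimpleGraph V} {x y : V} (hxy : x ≠ y)
    (c : G.Walk x x) (hc : c.IsCycle) (he : s(x, y) ∈ c.edges) :
    ∃ q : G.Walk y x, q.IsPath ∧ s(x, y) ∉ q.edges ∧
      {w : V | w ∈ c.support} = insert x {w : V | w ∈ q.support} := by
  cases c with
  | nil => simp at he
  | @cons _ b _ h q =>
    have hq : q.IsPath := by
      rw [Walk.isPath_def]
      simpa using hc.2
    have hnodup : (Walk.cons h q).edges.Nodup := hc.1.1.edges_nodup
    rw [Walk.edges_cons] at hnodup he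
    rcases List.mem_cons.mp he with he1 | he2
    · have hb : b = y := by
        rw [Sym2.eq_iff] at he1
        rcases he1 with ⟨-, h2⟩ | ⟨h1, h2⟩
        · exact h2.symm
        · exact h1.symm.trans h2.symm
      subst hb
      refine ⟨q, hq, ?_, ?_⟩
      · intro hmem
        exact (List.nodup_cons.mp hnodup).1 (he1 ▸ hmem)
      · ext w
        simp only [Walk.support_cons, List.mem_cons, Set.mem_setOf_eq, Set.mem_insert_iff]
    · -- edge s(x,y) inside q : Walk b x
      obtain ⟨h', r, hr⟩ := lemA q.reverse hq.reverse (by rwa [Walk.edges_reverse, List.mem_reverse])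
      have hbny : b ≠ y := by
        rintro rfl
        exact (List.nodup_cons.mp hnodup).1 (by simpa [Sym2.eq_iff] using he2)
      have hxr : x ∉ r.support := by
        have := hq.reverse
        rw [hr, Walk.cons_isPath_iff] at this
        exact this.2
      refine ⟨r.append (Walk.cons h.symm Walk.nil), ?_, ?_, ?_⟩
      · rw [Walk.isPath_def, Walk.support_append]
        simp only [Walk.support_cons, Walk.support_nil, List.tail_cons]
        rw [List.nodup_append]
        have : r.IsPath := by
          have := hq.reverse; rw [hr] at this; exact this.of_cons
        refine ⟨this.support_nodup, List.nodup_singleton x, ?_⟩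
        simp [List.disjoint_singleton, hxr]
        exact fun a ha hax => hxr (hax ▸ ha)
      · rw [Walk.edges_append]
        simp only [Walk.edges_cons, Walk.edges_nil, List.mem_append, List.mem_singleton]
        rintro (hmem | hmem)
        · have : s(x,y) ∈ q.edges := by
            have : s(x,y) ∈ q.reverse.edges := by rw [hr, Walk.edges_cons]; exact List.mem_cons_of_mem _ hmem
            rwa [Walk.edges_reverse, List.mem_reverse] at this
          have hnd : q.edges.Nodup := (List.nodup_cons.mp hnodup).2
          -- s(x,y) appears in q.edges; in q.reverse.edges it's the head, r.edges is tail
          have : q.reverse.edges.Nodup := by rwa [Walk.edges_reverse, List.nodup_reverse]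
          rw [hr, Walk.edges_cons, List.nodup_cons] at this
          exact this.1 hmem
        · rw [Sym2.eq_iff] at hmem
          rcases hmem with ⟨h1, h2⟩ | ⟨h1, h2⟩
          · exact h.ne h1
          · exact hbny h2.symm
      · ext w
        have hsupq : {w : V | w ∈ q.support} = insert x {w : V | w ∈ r.support} := by
          ext w
          have : q.support.reverse = q.reverse.support := (Walk.support_reverse q).symm
          constructor
          · intro hw
            have : w ∈ q.reverse.support := by rwa [Walk.support_reverse, List.mem_reverse]
            rw [hr, Walk.support_cons] at this
            simpa using this
          · intro hw
            have : w ∈ q.reverse.support := by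
              rw [hr, Walk.support_cons]; simpa using hw
            rwa [Walk.support_reverse, List.mem_reverse] at this
        simp only [Walk.support_cons, Walk.support_append, Walk.support_nil, List.tail_cons,
          Set.mem_setOf_eq, Set.mem_insert_iff, List.mem_cons, List.mem_append,
          List.mem_singleton] at *
        have hq' := Set.ext_iff.mp hsupq w
        simp only [Set.mem_setOf_eq, Set.mem_insert_iff] at hq'
        tauto

lemma memtail {V : Type*} {G : SimpleGraph V} {z : V} (c : G.Walk z z) (hc : c.IsCycle) (w : V) :
    w ∈ c.support ↔ w ∈ c.support.tail := by
  cases c with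
  | nil => simp at hc
  | cons h q =>
    simp only [SimpleGraph.Walk.support_cons, List.tail_cons, List.mem_cons]
    constructor
    · rintro (rfl | hw)
      · exact q.end_mem_support
      · exact hw
    · exact fun hw => Or.inr hw

theorem stmt_7 {V : Type*} [Fintype V] (T G : SimpleGraph V) (hT : T.IsTree)
    {x y : V} (hxy : x ≠ y) (hnadj : ¬ T.Adj x y)
    (hG : ∀ a b : V, G.Adj a b ↔ (T.Adj a b ∨ s(a, b) = s(x, y))) :
    ∀ (z : V) (c : G.Walk z z), c.IsCycle →
      s(x, y) ∈ c.edges ∧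
      ∀ p : T.Walk x y, p.IsPath →
        ({w : V | w ∈ c.support} = {w : V | w ∈ p.support}) := by
  classical
  intro z c hc
  have hedge : s(x, y) ∈ c.edges := by
    by_contra hne
    have hsub : ∀ e ∈ c.edges, e ∈ T.edgeSet := by
      intro e he
      induction e with
      | h a b =>
        have := c.edges_subset_edgeSet he
        rw [SimpleGraph.mem_edgeSet, hG] at this
        rcases this with h1 | h1
        · exact h1
        · exact absurd (h1 ▸ he) hne
    exact hT.IsAcyclic (c.transfer T hsub) (hc.transfer hsub)
  refine ⟨hedge, ?_⟩
  intro p hp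
  have hx : x ∈ c.support := c.fst_mem_support_of_mem_edges hedge
  set c' := c.rotate x hx with hc'
  have hc'cyc : c'.IsCycle := hc.rotate hx
  have hedge' : s(x, y) ∈ c'.edges := (c.rotate_edges x hx).mem_iff.mpr hedge
  obtain ⟨q, hq, hqe, hqs⟩ := lemB hxy c' hc'cyc hedge'
  have hsub2 : ∀ e ∈ q.edges, e ∈ T.edgeSet := by
    intro e he
    induction e with
    | h a b =>
      have := q.edges_subset_edgeSet he
      rw [SimpleGraph.mem_edgeSet, hG] at this
      rcases this with h1 | h1
      · exact h1
      · exact absurd (h1 ▸ he) hqe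
  have hqT : ((q.transfer T hsub2).reverse : T.Walk x y).IsPath := (hq.transfer hsub2).reverse
  have hpeq : p = (q.transfer T hsub2).reverse :=
    ((hT.existsUnique_path x y).unique hp hqT)
  have hps : {w : V | w ∈ p.support} = {w : V | w ∈ q.support} := by
    rw [hpeq]
    ext w
    simp [SimpleGraph.Walk.support_reverse, SimpleGraph.Walk.support_transfer]
  have hsupeq : {w : V | w ∈ c.support} = {w : V | w ∈ c'.support} := by
    ext w
    rw [Set.mem_setOf_eq, Set.mem_setOf_eq, memtail c hc w, memtail c' hc'cyc w,
      (c.support_rotate x hx).mem_iff]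
  rw [hsupeq, hqs, hps]
  rw [Set.insert_eq_self]
  exact q.end_mem_support
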